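/- arXiv:1305.3775 — 4 statements merged into one kernel-verified Lean document; each statement's English description precedes it below -/
import Mathlib

section
/- Under the hypotheses of the asymptotic contraction theorem in a uniform space with E-distance p (p-complete separated uniform space, T p-continuous, p(Tⁿx,Tⁿy) ≤ φₙ(p(x,y)) with φₙ → φ uniformly on the range of p, φ continuous with φ(t) < t for t > 0), one has p(Tⁿx, Tⁿy) → 0 as n → ∞ for all x, y ∈ X. -/
open Filter

/-- Under the hypotheses of the asymptotic contraction theorem,
`p (Tⁿx) (Tⁿy) → 0` for all `x, y`. -/
theorem stmt_6 {X : Type*} [UniformSpace X] [T2Space X]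
    (p : X → X → ℝ)
    (hp_nonneg : ∀ x y, 0 ≤ p x y)
    (hp_tri : ∀ x y z, p x z ≤ p x y + p y z)
    (hp_ent : ∀ U ∈ uniformity X, ∃ δ > (0:ℝ),
      ∀ x y z : X, p z x ≤ δ → p z y ≤ δ → (x, y) ∈ U)
    (hp_complete : ∀ xs : ℕ → X,
      Tendsto (fun q : ℕ × ℕ => p (xs q.1) (xs q.2)) atTop (nhds 0) →
      ∃ l : X, Tendsto (fun n => p (xs n) l) atTop (nhds 0))
    (T : X → X)
    (hT_cont : ∀ (xs : ℕ → X) (x : X),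
      Tendsto (fun n => p (xs n) x) atTop (nhds 0) →
      Tendsto (fun n => p (T (xs n)) (T x)) atTop (nhds 0))
    (φn : ℕ → ℝ → ℝ) (φ : ℝ → ℝ)
    (hφn_nonneg : ∀ n t, 0 ≤ t → 0 ≤ φn n t)
    (hunif : TendstoUniformlyOn φn φ atTop (Set.range fun q : X × X => p q.1 q.2))
    (hφ_cont : ContinuousOn φ (Set.Ici 0))
    (hφ_lt : ∀ t, 0 < t → φ t < t)
    (hcontr : ∀ x y : X, ∀ n : ℕ, 1 ≤ n → p (T^[n] x) (T^[n] y) ≤ φn n (p x y)) :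
    ∀ x y : X, Tendsto (fun n => p (T^[n] x) (T^[n] y)) atTop (nhds 0) := by
  -- first: φ 0 ≤ 0
  have hφ0 : φ 0 ≤ 0 := by
    have hcw : Tendsto φ (nhdsWithin 0 (Set.Ioi (0:ℝ))) (nhds (φ 0)) :=
      ((hφ_cont 0 (Set.self_mem_Ici)).mono (Set.Ioi_subset_Ici le_rfl)).tendsto
    have hid : Tendsto (fun t : ℝ => t) (nhdsWithin 0 (Set.Ioi (0:ℝ))) (nhds 0) :=
      tendsto_id.mono_left nhdsWithin_le_nhds
    exact le_of_tendsto_of_tendsto hcw hid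
      (eventually_nhdsWithin_of_forall fun t ht => (hφ_lt t ht).le)
  intro x y
  set a : ℕ → ℝ := fun n => p (T^[n] x) (T^[n] y) with ha
  have ha_nonneg : ∀ n, 0 ≤ a n := fun n => hp_nonneg _ _
  have hrange : ∀ m, a m ∈ Set.range fun q : X × X => p q.1 q.2 :=
    fun m => ⟨(T^[m] x, T^[m] y), rfl⟩
  have hpt : ∀ m, Tendsto (fun n => φn n (a m)) atTop (nhds (φ (a m))) :=
    fun m => hunif.tendsto_at (hrange m)
  have hshift : ∀ m n, 1 ≤ n → a (n + m) ≤ φn n (a m) := by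
    intro m n hn
    have h := hcontr (T^[m] x) (T^[m] y) n hn
    simpa [ha, ← Function.iterate_add_apply] using h
  -- boundedness
  obtain ⟨C, hC⟩ := (hpt 0).bddAbove_range
  set M : ℝ := max (a 0) C with hM
  have haM : ∀ n, a n ≤ M := by
    intro n
    rcases Nat.eq_zero_or_pos n with rfl | hn
    · exact le_max_left _ _
    · calc a n = a (n + 0) := by simp
        _ ≤ φn n (a 0) := hshift 0 n hn
        _ ≤ C := hC ⟨n, rfl⟩
        _ ≤ M := le_max_right _ _
  have hbddAbove : IsBoundedUnder (· ≤ ·) atTop a :=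
    isBoundedUnder_of ⟨M, haM⟩
  have hbddBelow : IsBoundedUnder (· ≥ ·) atTop a :=
    isBoundedUnder_of ⟨0, ha_nonneg⟩
  set L : ℝ := limsup a atTop with hL
  -- L ≤ φ (a m) for each m
  have hLφ : ∀ m, L ≤ φ (a m) := by
    intro m
    have h1 : limsup (fun n => a (n + m)) atTop ≤ limsup (fun n => φn n (a m)) atTop := by
      apply limsup_le_limsup
      · filter_upwards [eventually_ge_atTop 1] with n hn
        exact hshift m n hn
      · exact (isBoundedUnder_of ⟨0, fun n => ha_nonneg (n + m)⟩ :
          IsBoundedUnder (· ≥ ·) atTop fun n => a (n + m)).isCoboundedUnder_le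
      · exact (hpt m).isBoundedUnder_le
    rw [limsup_nat_add a m, (hpt m).limsup_eq] at h1
    exact h1
  -- cluster point
  have haIcc : ∀ n, a n ∈ Set.Icc (0:ℝ) M := fun n => ⟨ha_nonneg n, haM n⟩
  obtain ⟨t, htmem, σ, hσ, hσt⟩ :=
    tendsto_subseq_of_bounded (Metric.isBounded_Icc 0 M) haIcc
  have ht0 : 0 ≤ t := by
    have := htmem
    rw [closure_Icc] at this
    · exact this.1
  -- t ≤ L
  have htL : t ≤ L := by
    refine le_of_forall_pos_le_add ?_
    intro ε hε
    have hfreq : ∃ᶠ n in atTop, t - ε ≤ a n := by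
      have hev : ∀ᶠ k in atTop, t - ε ≤ a (σ k) := by
        have := hσt.eventually (eventually_ge_nhds (show t - ε < t by linarith))
        exact this
      exact (hσ.tendsto_atTop.frequently hev.frequently)
    have := le_limsup_of_frequently_le hfreq hbddAbove
    linarith
  -- L ≤ φ t
  have hLt : L ≤ φ t := by
    have hφcont : Tendsto (fun k => φ (a (σ k))) atTop (nhds (φ t)) := by
      have hct : ContinuousWithinAt φ (Set.Ici 0) t := hφ_cont t ht0
      exact hct.tendsto.comp (tendsto_nhdsWithin_iff.2
        ⟨hσt, Eventually.of_forall fun k => ha_nonneg _⟩)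
    exact ge_of_tendsto hφcont (Eventually.of_forall fun k => hLφ (σ k))
  -- conclude t = 0
  have ht_eq : t = 0 := by
    by_contra h
    have htpos : 0 < t := lt_of_le_of_ne ht0 (Ne.symm h)
    have : L < L := lt_of_le_of_lt hLt (lt_of_lt_of_le (hφ_lt t htpos) htL)
    exact lt_irrefl _ this
  have hL0 : L ≤ 0 := by
    rw [ht_eq] at hLt
    exact hLt.trans hφ0
  have hliminf : (0:ℝ) ≤ liminf a atTop :=
    le_liminf_of_le hbddAbove.isCoboundedUnder_ge (Eventually.of_forall ha_nonneg)
  exact tendsto_of_le_liminf_of_limsup_le hliminf hL0 hbddAbove hbddBelow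
end

section
/- Let X be a uniform space with E-distance p and T : X → X satisfying p(Tⁿx,Tⁿy) ≤ φₙ(p(x,y)) for all x,y ∈ X and n ≥ 1, where the nonnegative functions φₙ converge uniformly on the range of p to a continuous φ with φ(t) < t for all t > 0 and φₙ are eventually continuous. Then for every x ∈ X, the Picard sequence {Tⁿx} is p-Cauchy. -/
open Filter

/-- For an E-asymptotic contraction, every Picard sequence is p-Cauchy. -/
theorem stmt_7 {X : Type*} [UniformSpace X]
    (p : X → X → ℝ)
    (hp_nonneg : ∀ x y, 0 ≤ p x y)
    (hp_tri : ∀ x y z, p x z ≤ p x y + p y z)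
    (hp_ent : ∀ U ∈ uniformity X, ∃ δ > (0:ℝ),
      ∀ x y z : X, p z x ≤ δ → p z y ≤ δ → (x, y) ∈ U)
    (T : X → X)
    (φn : ℕ → ℝ → ℝ) (φ : ℝ → ℝ)
    (hφn_nonneg : ∀ n t, 0 ≤ t → 0 ≤ φn n t)
    (hφn_cont : ∃ N : ℕ, ∀ n ≥ N, ContinuousOn (φn n) (Set.Ici 0))
    (hunif : TendstoUniformlyOn φn φ atTop (Set.range fun q : X × X => p q.1 q.2))
    (hφ_cont : ContinuousOn φ (Set.Ici 0))
    (hφ_lt : ∀ t, 0 < t → φ t < t)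
    (hcontr : ∀ x y : X, ∀ n : ℕ, 1 ≤ n → p (T^[n] x) (T^[n] y) ≤ φn n (p x y)) :
    ∀ x : X,
      Tendsto (fun q : ℕ × ℕ => p (T^[q.1] x) (T^[q.2] x)) atTop (nhds 0) := by
  have hS : ∀ u v : X, p u v ∈ Set.range (fun q : X × X => p q.1 q.2) :=
    fun u v => ⟨(u, v), rfl⟩
  -- φ 0 ≤ 0 by continuity
  have hφ0 : φ 0 ≤ 0 := by
    have h1 : Tendsto (fun n : ℕ => (1:ℝ)/(n+1)) atTop (nhds 0) :=
      tendsto_one_div_add_atTop_nhds_zero_nat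
    have h2 : Tendsto (fun n : ℕ => (1:ℝ)/(n+1)) atTop (nhdsWithin 0 (Set.Ici 0)) :=
      tendsto_nhdsWithin_of_tendsto_nhds_of_eventually_within _ h1
        (Eventually.of_forall fun n => Set.mem_Ici.2 (by positivity))
    have h3 : Tendsto (fun n : ℕ => φ ((1:ℝ)/(n+1))) atTop (nhds (φ 0)) :=
      ((hφ_cont 0 Set.self_mem_Ici).tendsto).comp h2
    exact le_of_tendsto_of_tendsto h3 h1
      (Eventually.of_forall fun n => (hφ_lt _ (by positivity)).le)
  have hφ_le : ∀ t, 0 ≤ t → φ t ≤ t := by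
    intro t ht
    rcases ht.eq_or_lt with h | h
    · rw [← h]; exact hφ0
    · exact (hφ_lt t h).le
  -- Pair lemma: for any pair, orbit distances tend to 0
  have pair : ∀ a b : X, ∀ ρ : ℝ, 0 < ρ → ∀ᶠ n in atTop, p (T^[n] a) (T^[n] b) ≤ ρ := by
    intro a b ρ hρ
    set ε := ρ / 2 with hεdef
    have hε : 0 < ε := by positivity
    set B := max (φ (p a b) + 1) (2 * ε) with hBdef
    obtain ⟨N1, hN1⟩ := eventually_atTop.1 (Metric.tendstoUniformlyOn_iff.1 hunif 1 one_pos)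
    set k₁ := max N1 1 with hk₁def
    have hB : ∀ n, k₁ ≤ n → p (T^[n] a) (T^[n] b) ≤ B := by
      intro n hn
      have h2 := hcontr a b n (le_trans (le_max_right N1 1) hn)
      have h3 := hN1 n (le_trans (le_max_left N1 1) hn) (p a b) (hS a b)
      rw [Real.dist_eq, abs_sub_lt_iff] at h3
      have h4 : φn n (p a b) ≤ φ (p a b) + 1 := by linarith [h3.2]
      exact le_trans h2 (le_trans h4 (le_max_left _ _))
    have hεB : ε ≤ B := le_trans (by linarith) (le_max_right _ _)
    obtain ⟨t₀, ht₀, hmin⟩ := isCompact_Icc.exists_isMinOn (Set.nonempty_Icc.2 hεB)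
      (continuousOn_id.sub (hφ_cont.mono fun t ht => le_trans hε.le ht.1))
    set η := t₀ - φ t₀ with hηdef
    have hη : 0 < η := sub_pos.2 (hφ_lt t₀ (lt_of_lt_of_le hε ht₀.1))
    have hkey : ∀ t, 0 ≤ t → t ≤ B → φ t ≤ max ε (t - η) := by
      intro t ht htB
      rcases lt_or_ge t ε with h | h
      · exact le_max_of_le_left (le_trans (hφ_le t ht) h.le)
      · refine le_max_of_le_right ?_
        have := isMinOn_iff.1 hmin t ⟨h, htB⟩
        simp only [Pi.sub_apply, id_eq] at this
        linarith
    set δ₀ := min (η/2) ε with hδ₀def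
    have hδ₀ : 0 < δ₀ := lt_min (by positivity) hε
    have hδ₀η : δ₀ ≤ η / 2 := min_le_left _ _
    have hδ₀ε : δ₀ ≤ ε := min_le_right _ _
    obtain ⟨j, hjb, hj1⟩ := ((Metric.tendstoUniformlyOn_iff.1 hunif δ₀ hδ₀).and
      (eventually_ge_atTop 1)).exists
    have iter : ∀ i : ℕ, ∀ n, k₁ + i * j ≤ n →
        p (T^[n] a) (T^[n] b) ≤ max (ε + δ₀) (B - (i : ℝ) * (η/2)) := by
      intro i
      induction i with
      | zero =>
        intro n hn
        simp only [Nat.zero_mul, Nat.add_zero] at hn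
        have := hB n hn
        refine le_trans this (le_trans (le_of_eq ?_) (le_max_right _ _))
        push_cast; ring
      | succ i ih =>
        intro n hn
        have hjn : j ≤ n := by
          calc j ≤ (i+1)*j := Nat.le_mul_of_pos_left j i.succ_pos
          _ ≤ k₁ + (i+1)*j := Nat.le_add_left _ _
          _ ≤ n := hn
        have hprev : k₁ + i*j ≤ n - j := by
          have h5 : (i+1)*j = i*j + j := by ring
          rw [h5] at hn
          omega
        have ht := ih (n - j) hprev
        have hc := hcontr (T^[n-j] a) (T^[n-j] b) j hj1
        have e1 : T^[j] (T^[n-j] a) = T^[n] a := by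
          rw [← Function.iterate_add_apply, Nat.add_sub_cancel' hjn]
        have e2 : T^[j] (T^[n-j] b) = T^[n] b := by
          rw [← Function.iterate_add_apply, Nat.add_sub_cancel' hjn]
        rw [e1, e2] at hc
        set t := p (T^[n-j] a) (T^[n-j] b) with htdef
        have ht0 : 0 ≤ t := hp_nonneg _ _
        have hεδB : ε + δ₀ ≤ B := le_trans (by linarith) (le_max_right _ _)
        have hiη : 0 ≤ (i : ℝ) * (η/2) :=
          mul_nonneg (Nat.cast_nonneg i) (by positivity)
        have htB : t ≤ B := le_trans ht (max_le hεδB (by linarith))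
        have hφt : φ t ≤ max ε (t - η) := hkey t ht0 htB
        have hb := hjb t (hS _ _)
        rw [Real.dist_eq, abs_sub_lt_iff] at hb
        have hbnd : p (T^[n] a) (T^[n] b) ≤ max ε (t - η) + δ₀ := by
          have : φn j t ≤ φ t + δ₀ := by linarith [hb.2]
          linarith [le_trans hc this]
        refine le_trans hbnd ?_
        rw [← max_add_add_right]
        refine max_le (le_max_left _ _) ?_
        have h6 : t - η + δ₀ ≤ max (ε + δ₀) (B - (i:ℝ)*(η/2)) - η/2 := by
          have := le_trans ht (le_refl _)
          linarith [ht]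
        refine le_trans h6 ?_
        rw [← max_sub_sub_right]
        refine max_le (le_max_of_le_left (by linarith)) (le_max_of_le_right ?_)
        push_cast
        linarith
    obtain ⟨i, hi⟩ := exists_nat_ge ((B - (ε + δ₀)) / (η / 2))
    refine eventually_atTop.2 ⟨k₁ + i * j, fun n hn => ?_⟩
    have h7 := iter i n hn
    have h8 : B - (i:ℝ) * (η/2) ≤ ε + δ₀ := by
      rw [div_le_iff₀ (by positivity)] at hi
      linarith
    have h9 : p (T^[n] a) (T^[n] b) ≤ ε + δ₀ := le_trans h7 (max_le le_rfl h8)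
    linarith
  -- Main part
  intro x
  have H : ∀ ε : ℝ, 0 < ε → ∃ K, ∀ m, K ≤ m → ∀ n, K ≤ n →
      p (T^[m] x) (T^[n] x) ≤ ε := by
    intro ε hε
    have hεint : ε/2 ≤ ε + 1 := by linarith
    obtain ⟨t₀, ht₀, hmin⟩ := isCompact_Icc.exists_isMinOn (Set.nonempty_Icc.2 hεint)
      (continuousOn_id.sub (hφ_cont.mono fun t ht => le_trans (by positivity) ht.1))
    set η := t₀ - φ t₀ with hηdef
    have hη : 0 < η := sub_pos.2 (hφ_lt t₀ (lt_of_lt_of_le (by positivity) ht₀.1))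
    set δ := min η (min ε 1) / 4 with hδdef
    have hδ : 0 < δ := by
      have h1 : 0 < min η (min ε 1) := lt_min hη (lt_min hε one_pos)
      positivity
    have hδη : 4*δ ≤ η := by
      have := min_le_left η (min ε 1); rw [hδdef]; linarith
    have hδε : 4*δ ≤ ε := by
      have h1 := min_le_right η (min ε 1)
      have h2 := min_le_left ε 1
      rw [hδdef]; linarith
    have hδ1 : 4*δ ≤ 1 := by
      have h1 := min_le_right η (min ε 1)
      have h2 := min_le_right ε 1
      rw [hδdef]; linarith
    have key2 : ∀ t, 0 ≤ t → t ≤ ε + 3*δ → φ t ≤ ε - δ := by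
      intro t ht htb
      rcases le_or_gt t (ε/2) with h | h
      · exact le_trans (hφ_le t ht) (by linarith)
      · have := isMinOn_iff.1 hmin t ⟨h.le, by linarith⟩
        simp only [Pi.sub_apply, id_eq] at this
        linarith
    obtain ⟨j, hjb, hj1⟩ := ((Metric.tendstoUniformlyOn_iff.1 hunif δ hδ).and
      (eventually_ge_atTop 1)).exists
    have hall : ∀ᶠ n in atTop, ∀ g ∈ Finset.range (j+1),
        p (T^[n] x) (T^[n+g] x) ≤ δ ∧ p (T^[n+g] x) (T^[n] x) ≤ δ := by
      rw [eventually_all_finset]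
      intro g _
      filter_upwards [pair x (T^[g] x) δ hδ, pair (T^[g] x) x δ hδ] with n hn1 hn2
      rw [Function.iterate_add_apply]
      exact ⟨hn1, hn2⟩
    obtain ⟨K₀, hK₀⟩ := eventually_atTop.1 hall
    have claim : ∀ g, ∀ m, K₀ + j ≤ m →
        p (T^[m] x) (T^[m+g] x) ≤ ε ∧ p (T^[m+g] x) (T^[m] x) ≤ ε := by
      intro g
      induction g using Nat.strong_induction_on with
      | _ g ih =>
        intro m hm
        rcases le_or_gt g j with hg | hg
        · have hb := hK₀ m (by omega) g (Finset.mem_range.2 (by omega))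
          exact ⟨le_trans hb.1 (by linarith), le_trans hb.2 (by linarith)⟩
        · obtain ⟨u, rfl⟩ : ∃ u, m = u + j := ⟨m - j, by omega⟩
          have hbase := hK₀ u (by omega) j (Finset.mem_range.2 (by omega))
          have IH := ih (g - j) (by omega) (u + j) hm
          have hgj : u + j + (g - j) = u + g := by omega
          rw [hgj] at IH
          have e1 : T^[j] (T^[u] x) = T^[u+j] x := by
            rw [← Function.iterate_add_apply, Nat.add_comm]
          have e2 : T^[j] (T^[u+g] x) = T^[u+j+g] x := by
            rw [← Function.iterate_add_apply,
              (show j + (u + g) = u + j + g by omega)]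
          constructor
          · -- forward
            have ht1 : p (T^[u] x) (T^[u+g] x) ≤ δ + ε :=
              le_trans (hp_tri _ (T^[u+j] x) _) (add_le_add hbase.1 IH.1)
            have hc := hcontr (T^[u] x) (T^[u+g] x) j hj1
            rw [e1, e2] at hc
            have hφt := key2 _ (hp_nonneg (T^[u] x) (T^[u+g] x)) (by linarith)
            have hb := hjb (p (T^[u] x) (T^[u+g] x)) (hS _ _)
            rw [Real.dist_eq, abs_sub_lt_iff] at hb
            have : φn j (p (T^[u] x) (T^[u+g] x)) ≤ ε := by linarith [hb.2]
            exact le_trans hc this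
          · -- backward
            have ht1 : p (T^[u+g] x) (T^[u] x) ≤ ε + δ :=
              le_trans (hp_tri _ (T^[u+j] x) _) (add_le_add IH.2 hbase.2)
            have hc := hcontr (T^[u+g] x) (T^[u] x) j hj1
            rw [e1, e2] at hc
            have hφt := key2 _ (hp_nonneg (T^[u+g] x) (T^[u] x)) (by linarith)
            have hb := hjb (p (T^[u+g] x) (T^[u] x)) (hS _ _)
            rw [Real.dist_eq, abs_sub_lt_iff] at hb
            have : φn j (p (T^[u+g] x) (T^[u] x)) ≤ ε := by linarith [hb.2]
            exact le_trans hc this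
    refine ⟨K₀ + j, fun m hm n hn => ?_⟩
    rcases le_total m n with h | h
    · obtain ⟨g, rfl⟩ := Nat.exists_eq_add_of_le h
      exact (claim g m hm).1
    · obtain ⟨g, rfl⟩ := Nat.exists_eq_add_of_le h
      exact (claim g n hn).2
  rw [Metric.tendsto_nhds]
  intro ε hε
  obtain ⟨K, hK⟩ := H (ε/2) (by positivity)
  rw [eventually_atTop]
  refine ⟨(K, K), fun q hq => ?_⟩
  have h1 := hK q.1 hq.1 q.2 hq.2
  rw [Real.dist_eq, sub_zero, abs_of_nonneg (hp_nonneg _ _)]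
  linarith
end

section
/- Let X be a uniform space with E-distance p and T : X → X satisfy p(Tx,Ty) ≤ ψ(p(x,y)) for all x,y ∈ X, where ψ : ℝ≥0 → ℝ≥0 is upper semicontinuous from the right, ψ(t) < t for all t > 0, and ψ(0) = 0. Then for every x ∈ X the Picard sequence {Tⁿx} is p-Cauchy. -/
open Filter

/-- `ψ` is upper semicontinuous from the right at `t`: whenever `sₙ ↓ t`,
`limsup ψ(sₙ) ≤ ψ(t)`. -/
def USCRightAt (ψ : ℝ → ℝ) (t : ℝ) : Prop :=
  ∀ s : ℕ → ℝ, (∀ n, t ≤ s n) → Antitone s →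
    Filter.Tendsto s Filter.atTop (nhds t) →
    Filter.limsup (fun n => ψ (s n)) Filter.atTop ≤ ψ t

/-- `ψ` is upper semicontinuous from the right on `[0,∞)`. -/
def USCRight (ψ : ℝ → ℝ) : Prop := ∀ t, 0 ≤ t → USCRightAt ψ t

lemma psi_le_self (ψ : ℝ → ℝ) (hψ_lt : ∀ t, 0 < t → ψ t < t) (hψ_zero : ψ 0 = 0)
    {t : ℝ} (ht : 0 ≤ t) : ψ t ≤ t := by
  rcases ht.eq_or_lt with h | h
  · simp [← h, hψ_zero]
  · exact (hψ_lt t h).le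

lemma iter_toZero (ψ : ℝ → ℝ)
    (hψ_usc : USCRight ψ)
    (hψ_lt : ∀ t, 0 < t → ψ t < t)
    (hψ_zero : ψ 0 = 0)
    (u : ℕ → ℝ) (hu0 : ∀ n, 0 ≤ u n) (hstep : ∀ n, u (n + 1) ≤ ψ (u n)) :
    Tendsto u atTop (nhds 0) := by
  have hanti : Antitone u :=
    antitone_nat_of_succ_le fun n => (hstep n).trans (psi_le_self ψ hψ_lt hψ_zero (hu0 n))
  have hbdd : BddBelow (Set.range u) := ⟨0, by rintro _ ⟨n, rfl⟩; exact hu0 n⟩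
  have hlim : Tendsto u atTop (nhds (⨅ n, u n)) := tendsto_atTop_ciInf hanti hbdd
  set δ := ⨅ n, u n with hδ
  have hδ0 : 0 ≤ δ := le_ciInf hu0
  have hδle : ∀ n, δ ≤ u n := fun n => ciInf_le hbdd n
  rcases hδ0.eq_or_lt with h | h
  · rwa [← h] at hlim
  · exfalso
    have husc := hψ_usc δ hδ0 u hδle hanti hlim
    have hfreq : ∃ᶠ n in atTop, δ ≤ ψ (u n) :=
      Frequently.of_forall fun n => (hδle (n + 1)).trans (hstep n)
    have hbu : IsBoundedUnder (· ≤ ·) atTop fun n => ψ (u n) :=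
      isBoundedUnder_of ⟨u 0, fun n =>
        (psi_le_self ψ hψ_lt hψ_zero (hu0 n)).trans (hanti (Nat.zero_le n))⟩
    have := (le_limsup_of_frequently_le hfreq hbu).trans husc
    exact absurd (this.trans_lt (hψ_lt δ h)) (lt_irrefl δ)

lemma forward_cauchy {X : Type*}
    (p : X → X → ℝ)
    (hp_nonneg : ∀ x y, 0 ≤ p x y)
    (hp_tri : ∀ x y z, p x z ≤ p x y + p y z)
    (T : X → X) (ψ : ℝ → ℝ)
    (hψ_nonneg : ∀ t, 0 ≤ t → 0 ≤ ψ t)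
    (hψ_usc : USCRight ψ)
    (hψ_lt : ∀ t, 0 < t → ψ t < t)
    (hψ_zero : ψ 0 = 0)
    (hcontr : ∀ x y : X, p (T x) (T y) ≤ ψ (p x y))
    (x : X) {ε : ℝ} (hε : 0 < ε) :
    ∃ N : ℕ, ∀ m n : ℕ, N ≤ n → n < m → p (T^[n] x) (T^[m] x) ≤ ε := by
  classical
  set f : ℕ → X := fun n => T^[n] x with hfdef
  have hf : ∀ n, f (n + 1) = T (f n) := fun n => Function.iterate_succ_apply' T n x
  set d : ℕ → ℝ := fun n => p (f n) (f (n + 1)) with hd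
  set e : ℕ → ℝ := fun n => p (f (n + 1)) (f n) with he
  have hd0 : Tendsto d atTop (nhds 0) := by
    refine iter_toZero ψ hψ_usc hψ_lt hψ_zero d (fun n => hp_nonneg _ _) fun n => ?_
    simpa only [hd, hf] using hcontr (f n) (f (n + 1))
  have he0 : Tendsto e atTop (nhds 0) := by
    refine iter_toZero ψ hψ_usc hψ_lt hψ_zero e (fun n => hp_nonneg _ _) fun n => ?_
    simpa only [he, hf] using hcontr (f (n + 1)) (f n)
  by_contra hcon
  push_neg at hcon
  -- N₀ : tail bound for d, e
  obtain ⟨N₀, hN₀⟩ : ∃ N₀, ∀ j, N₀ ≤ j → d j ≤ ε / 2 ∧ e j ≤ ε / 2 := by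
    have h1 := (hd0.eventually (ge_mem_nhds (show (0:ℝ) < ε/2 by linarith))).and
      (he0.eventually (ge_mem_nhds (show (0:ℝ) < ε/2 by linarith)))
    rw [eventually_atTop] at h1
    obtain ⟨N₀, h⟩ := h1
    exact ⟨N₀, fun j hj => ⟨(h j hj).1, (h j hj).2⟩⟩
  have hc : ∀ n, N₀ ≤ n → p (f n) (f n) ≤ ε := fun n hn =>
    (hp_tri (f n) (f (n + 1)) (f n)).trans
      (by have := hN₀ n hn; linarith [this.1, this.2])
  -- key selection
  have H : ∀ k : ℕ, ∃ n m : ℕ, max k N₀ ≤ n ∧ n < m ∧ ε < p (f n) (f m) ∧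
      p (f n) (f (m - 1)) ≤ ε := by
    intro k
    obtain ⟨m, n, hn, hnm, hlt⟩ := hcon (max k N₀)
    have hex : ∃ m, n < m ∧ ε < p (f n) (f m) := ⟨m, hnm, hlt⟩
    obtain ⟨hm0n, hm0⟩ := Nat.find_spec hex
    refine ⟨n, Nat.find hex, hn, hm0n, hm0, ?_⟩
    rcases eq_or_lt_of_le (Nat.succ_le_of_lt hm0n) with heq | hlt'
    · have h1 : Nat.find hex - 1 = n := by omega
      rw [h1]
      exact hc n (le_trans (le_max_right _ _) hn)
    · have hmin := Nat.find_min hex (m := Nat.find hex - 1) (by omega)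
      push_neg at hmin
      exact hmin (by omega)
  choose n m hn hnm hr1 hr2 using H
  set r : ℕ → ℝ := fun k => p (f (n k)) (f (m k)) with hrdef
  have hrε : ∀ k, ε < r k := hr1
  have hub : ∀ k, r k ≤ ε + d (m k - 1) := by
    intro k
    have h1 : m k - 1 + 1 = m k := by have := hnm k; omega
    calc r k ≤ p (f (n k)) (f (m k - 1)) + p (f (m k - 1)) (f (m k - 1 + 1)) := by
          rw [h1]; exact hp_tri _ _ _
      _ ≤ ε + d (m k - 1) := by exact add_le_add (hr2 k) le_rfl
  have hkey : ∀ k, r k ≤ d (n k) + ψ (r k) + e (m k) := by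
    intro k
    have h1 : p (f (n k + 1)) (f (m k + 1)) ≤ ψ (r k) := by
      simpa only [hf] using hcontr (f (n k)) (f (m k))
    calc r k ≤ p (f (n k)) (f (n k + 1)) + p (f (n k + 1)) (f (m k)) := hp_tri _ _ _
      _ ≤ p (f (n k)) (f (n k + 1)) +
          (p (f (n k + 1)) (f (m k + 1)) + p (f (m k + 1)) (f (m k))) :=
          add_le_add le_rfl (hp_tri _ _ _)
      _ ≤ d (n k) + ψ (r k) + e (m k) := by
          have := h1; simp only [hd, he]; linarith
  have hnk : ∀ k, k ≤ n k := fun k => le_trans (le_max_left _ _) (hn k)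
  have hmk1 : ∀ k, k ≤ m k - 1 := fun k => le_trans (hnk k) (by have := hnm k; omega)
  have hmk : ∀ k, k ≤ m k := fun k => le_trans (hnk k) (hnm k).le
  -- r → ε
  have hdm : Tendsto (fun k => d (m k - 1)) atTop (nhds 0) :=
    hd0.comp (tendsto_atTop_mono hmk1 tendsto_id)
  have hdn : Tendsto (fun k => d (n k)) atTop (nhds 0) :=
    hd0.comp (tendsto_atTop_mono hnk tendsto_id)
  have hem : Tendsto (fun k => e (m k)) atTop (nhds 0) :=
    he0.comp (tendsto_atTop_mono hmk tendsto_id)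
  have hrlim : Tendsto r atTop (nhds ε) := by
    have hupper : Tendsto (fun k => ε + d (m k - 1)) atTop (nhds ε) := by
      simpa using tendsto_const_nhds.add hdm
    exact tendsto_of_tendsto_of_tendsto_of_le_of_le tendsto_const_nhds hupper
      (fun k => (hrε k).le) hub
  -- strictly decreasing subsequence
  have hsub : ∀ K : ℕ, ∀ v : ℝ, ε < v → ∃ k, K ≤ k ∧ r k < v := by
    intro K v hv
    have h1 : ∀ᶠ k in atTop, r k < v := hrlim.eventually (gt_mem_nhds hv)
    obtain ⟨k, hk1, hk2⟩ := (h1.and (eventually_ge_atTop K)).exists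
    exact ⟨k, hk2, hk1⟩
  choose g hg1 hg2 using hsub
  set φ : ℕ → ℕ := fun j => Nat.rec 0 (fun _ prev => g (prev + 1) (r prev) (hrε prev)) j
    with hφdef
  have hφsucc : ∀ j, φ (j + 1) = g (φ j + 1) (r (φ j)) (hrε (φ j)) := fun j => rfl
  have hφmono : StrictMono φ := strictMono_nat_of_lt_succ fun j => by
    rw [hφsucc]; exact lt_of_lt_of_le (Nat.lt_succ_self _) (hg1 _ _ _)
  have hφdec : ∀ j, r (φ (j + 1)) < r (φ j) := fun j => by
    rw [hφsucc]; exact hg2 _ _ _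
  set s : ℕ → ℝ := fun j => r (φ j) with hsdef
  have hs_anti : Antitone s := antitone_nat_of_succ_le fun j => (hφdec j).le
  have hs_ge : ∀ j, ε ≤ s j := fun j => (hrε (φ j)).le
  have hs_lim : Tendsto s atTop (nhds ε) := hrlim.comp hφmono.tendsto_atTop
  have husc := hψ_usc ε hε.le s hs_ge hs_anti hs_lim
  -- lower bound for limsup
  set L : ℕ → ℝ := fun j => ε - d (n (φ j)) - e (m (φ j)) with hLdef
  have hLlim : Tendsto L atTop (nhds ε) := by
    have h1 : Tendsto (fun j => d (n (φ j))) atTop (nhds 0) :=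
      hdn.comp hφmono.tendsto_atTop
    have h2 : Tendsto (fun j => e (m (φ j))) atTop (nhds 0) :=
      hem.comp hφmono.tendsto_atTop
    simpa using (tendsto_const_nhds.sub h1).sub h2
  have hLle : ∀ j, L j ≤ ψ (s j) := by
    intro j
    have := hkey (φ j)
    have h2 := hrε (φ j)
    simp only [hLdef, hsdef]
    linarith
  have hεle : ε ≤ limsup (fun j => ψ (s j)) atTop := by
    have h1 : liminf L atTop = ε := hLlim.liminf_eq
    have h2 : liminf L atTop ≤ liminf (fun j => ψ (s j)) atTop := by
      refine liminf_le_liminf (Eventually.of_forall hLle) ?_ ?_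
      · exact hLlim.isBoundedUnder_ge
      · exact IsBoundedUnder.isCoboundedUnder_ge
          (isBoundedUnder_of ⟨s 0, fun j =>
            ((psi_le_self ψ hψ_lt hψ_zero ((hε.trans_le (hs_ge j)).le)).trans
              (hs_anti (Nat.zero_le j)))⟩)
    have h3 : liminf (fun j => ψ (s j)) atTop ≤ limsup (fun j => ψ (s j)) atTop := by
      refine liminf_le_limsup ?_ ?_
      · exact isBoundedUnder_of ⟨s 0, fun j =>
          (psi_le_self ψ hψ_lt hψ_zero ((hε.trans_le (hs_ge j)).le)).trans
            (hs_anti (Nat.zero_le j))⟩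
      · exact isBoundedUnder_of ⟨0, fun j => hψ_nonneg _ (hε.trans_le (hs_ge j)).le⟩
    calc ε = liminf L atTop := h1.symm
      _ ≤ liminf (fun j => ψ (s j)) atTop := h2
      _ ≤ limsup (fun j => ψ (s j)) atTop := h3
  exact absurd ((hεle.trans husc).trans_lt (hψ_lt ε hε)) (lt_irrefl ε)

/-- For a Boyd–Wong type E-contraction, every Picard sequence is p-Cauchy. -/
theorem stmt_13 {X : Type*} [UniformSpace X]
    (p : X → X → ℝ)
    (hp_nonneg : ∀ x y, 0 ≤ p x y)
    (hp_tri : ∀ x y z, p x z ≤ p x y + p y z)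
    (hp_ent : ∀ U ∈ uniformity X, ∃ δ > (0:ℝ),
      ∀ x y z : X, p z x ≤ δ → p z y ≤ δ → (x, y) ∈ U)
    (T : X → X) (ψ : ℝ → ℝ)
    (hψ_nonneg : ∀ t, 0 ≤ t → 0 ≤ ψ t)
    (hψ_usc : USCRight ψ)
    (hψ_lt : ∀ t, 0 < t → ψ t < t)
    (hψ_zero : ψ 0 = 0)
    (hcontr : ∀ x y : X, p (T x) (T y) ≤ ψ (p x y)) :
    ∀ x : X,
      Tendsto (fun q : ℕ × ℕ => p (T^[q.1] x) (T^[q.2] x)) atTop (nhds 0) := by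
  intro x
  set f : ℕ → X := fun n => T^[n] x with hfdef
  have hf : ∀ n, f (n + 1) = T (f n) := fun n => Function.iterate_succ_apply' T n x
  rw [Metric.tendsto_nhds]
  intro ε hε
  have hε2 : 0 < ε / 2 := by linarith
  -- forward
  obtain ⟨N₁, hN₁⟩ := forward_cauchy p hp_nonneg hp_tri T ψ hψ_nonneg hψ_usc hψ_lt
    hψ_zero hcontr x hε2
  -- backward (swapped p)
  obtain ⟨N₂, hN₂⟩ := forward_cauchy (fun a b => p b a) (fun a b => hp_nonneg b a)
    (fun a b c => by have := hp_tri c b a; linarith)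
    T ψ hψ_nonneg hψ_usc hψ_lt hψ_zero (fun a b => hcontr b a) x hε2
  -- diagonal
  have hd0 : Tendsto (fun n => p (f n) (f (n + 1))) atTop (nhds 0) := by
    refine iter_toZero ψ hψ_usc hψ_lt hψ_zero _ (fun n => hp_nonneg _ _) fun n => ?_
    simpa only [hf] using hcontr (f n) (f (n + 1))
  have he0 : Tendsto (fun n => p (f (n + 1)) (f n)) atTop (nhds 0) := by
    refine iter_toZero ψ hψ_usc hψ_lt hψ_zero _ (fun n => hp_nonneg _ _) fun n => ?_
    simpa only [hf] using hcontr (f (n + 1)) (f n)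
  obtain ⟨N₃, hN₃⟩ : ∃ N₃ : ℕ, ∀ j, N₃ ≤ j → p (f j) (f j) < ε / 2 := by
    have h1 := (hd0.eventually (gt_mem_nhds (show (0:ℝ) < ε/4 by linarith))).and
      (he0.eventually (gt_mem_nhds (show (0:ℝ) < ε/4 by linarith)))
    rw [eventually_atTop] at h1
    obtain ⟨N₃, h⟩ := h1
    refine ⟨N₃, fun j hj => ?_⟩
    have h2 := hp_tri (f j) (f (j + 1)) (f j)
    have h3 := (h j hj).1
    have h4 := (h j hj).2
    linarith
  rw [eventually_atTop]
  refine ⟨(max N₁ N₂, max (max N₁ N₂) N₃), fun q hq => ?_⟩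
  obtain ⟨hq1, hq2⟩ := hq
  simp only at hq1 hq2
  have hv : p (f q.1) (f q.2) < ε := by
    rcases lt_trichotomy q.1 q.2 with h | h | h
    · have := hN₁ q.2 q.1 (le_trans (le_max_left _ _) hq1) h
      linarith
    · have h5 := hN₃ q.2 (le_trans (le_max_right _ _) hq2)
      rw [h]
      linarith
    · have := hN₂ q.1 q.2 (le_trans (le_trans (le_max_right _ _) (le_max_left _ N₃)) hq2) h
      linarith
  have hnn := hp_nonneg (f q.1) (f q.2)
  rw [Real.dist_eq, sub_zero, abs_of_nonneg hnn]
  exact hv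
end

section
/- Define T : [0,1] → [0,1] by Tx = 0 for 0 ≤ x < 1 and T1 = 1/4. Then there is no function ψ : ℝ≥0 → ℝ≥0 with ψ(t) < t for all t > 0 such that |Tx − Ty| ≤ ψ(|x − y|) for all x,y ∈ [0,1]; but with the E-distance p(x,y) = max{x,y}, T satisfies p(Tx,Ty) ≤ p(x,y)/4 for all x,y ∈ [0,1]. -/
/-- The map `T` with `Tx = 0` for `x < 1`, `T1 = 1/4` satisfies no Boyd–Wong
metric contraction condition, yet is a Boyd–Wong contraction for the
E-distance `p x y = max x y` with `ψ t = t/4`. -/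
theorem stmt_16 (T : Set.Icc (0:ℝ) 1 → Set.Icc (0:ℝ) 1)
    (hT : ∀ x : Set.Icc (0:ℝ) 1, (T x : ℝ) = if (x : ℝ) = 1 then 1/4 else 0) :
    (¬ ∃ ψ : ℝ → ℝ, (∀ t : ℝ, 0 < t → ψ t < t) ∧
        ∀ x y : Set.Icc (0:ℝ) 1, |(T x : ℝ) - (T y : ℝ)| ≤ ψ |(x : ℝ) - (y : ℝ)|) ∧
    (∀ x y : Set.Icc (0:ℝ) 1,
        max (T x : ℝ) (T y : ℝ) ≤ max (x : ℝ) (y : ℝ) / 4) := by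
  constructor
  · rintro ⟨ψ, hψ, hcon⟩
    have h1 : (1:ℝ) ∈ Set.Icc (0:ℝ) 1 := by norm_num
    have h2 : (3/4:ℝ) ∈ Set.Icc (0:ℝ) 1 := by norm_num
    have := hcon ⟨1, h1⟩ ⟨3/4, h2⟩
    rw [hT, hT] at this
    norm_num at this
    have := hψ (1/4) (by norm_num)
    linarith
  · intro x y
    have hx0 := x.2.1
    have hx1 := x.2.2
    have hy0 := y.2.1
    have hy1 := y.2.2
    rw [hT, hT]
    by_cases hx : (x:ℝ) = 1 <;> by_cases hy : (y:ℝ) = 1 <;>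
      simp [hx, hy, le_div_iff₀, max_le_iff, le_max_iff] <;> first
      | (left; linarith)
      | (right; linarith)
      | positivity
end
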